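/- arXiv:2106.13979 — 2 statements merged into one kernel-verified Lean document; each statement's English description precedes it below -/
import Mathlib

section
/- If Δ is a reflexive polytope in ℝⁿ (with the origin as its unique interior lattice point), then the Fine interior F(Δ) equals {0}. -/
noncomputable section

def pairing {n : ℕ} (x : Fin n → ℝ) (ν : Fin n → ℤ) : ℝ := ∑ i, x i * (ν i : ℝ)

def IsLatticePoint {n : ℕ} (x : Fin n → ℝ) : Prop := ∀ i, ∃ z : ℤ, x i = (z : ℝ)

/-- `ord_Δ(ν) := min_{m ∈ Δ ∩ M} ⟨m, ν⟩`. -/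
def ordL {n : ℕ} (Δ : Set (Fin n → ℝ)) (ν : Fin n → ℤ) : ℝ :=
  sInf ((fun m => pairing m ν) '' {m ∈ Δ | IsLatticePoint m})

/-- The Fine interior `F(Δ)`. -/
def FineInterior {n : ℕ} (Δ : Set (Fin n → ℝ)) : Set (Fin n → ℝ) :=
  { x | ∀ ν : Fin n → ℤ, ν ≠ 0 → ordL Δ ν + 1 ≤ pairing x ν }

lemma pairing_linear {n : ℕ} (w : Fin n → ℤ) :
    IsLinearMap ℝ (fun x : Fin n → ℝ => pairing x w) := by
  constructor
  · intro x y
    simp [pairing, add_mul, Finset.sum_add_distrib]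
  · intro c x
    simp [pairing, Finset.mul_sum, mul_assoc]

lemma pairing_int {n : ℕ} (v : Fin n → ℝ) (hv : IsLatticePoint v) (w : Fin n → ℤ) :
    ∃ z : ℤ, pairing v w = (z : ℝ) := by
  choose z hz using hv
  refine ⟨∑ i, z i * w i, ?_⟩
  simp only [pairing]
  rw [Int.cast_sum]
  exact Finset.sum_congr rfl fun i _ => by rw [hz i]; push_cast; ring

lemma ordL_le_neg_one {n : ℕ}
    (V : Finset (Fin n → ℝ)) (hV : ∀ v ∈ V, IsLatticePoint v)
    (Δ : Set (Fin n → ℝ))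
    (hΔpoly : Δ = convexHull ℝ (V : Set (Fin n → ℝ)))
    (h0int : (0 : Fin n → ℝ) ∈ interior Δ)
    (w : Fin n → ℤ) (hw : w ≠ 0) : ordL Δ w ≤ -1 := by
  have hVsub : (V : Set (Fin n → ℝ)) ⊆ Δ := hΔpoly ▸ subset_convexHull ℝ _
  have hne : V.Nonempty := by
    rcases V.eq_empty_or_nonempty with h | h
    · exfalso
      have h0 : (0 : Fin n → ℝ) ∈ Δ := interior_subset h0int
      rw [hΔpoly, h] at h0
      simp at h0
    · exact h
  set f : (Fin n → ℝ) → ℝ := fun x => pairing x w with hf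
  set c : ℝ := V.inf' hne f with hc
  have hbound : ∀ m ∈ Δ, c ≤ f m := by
    intro m hm
    rw [hΔpoly] at hm
    have hsub : convexHull ℝ (V : Set (Fin n → ℝ)) ⊆ {x | c ≤ f x} :=
      convexHull_min (fun v hv => Finset.inf'_le f hv)
        (convex_halfSpace_ge (pairing_linear w) c)
    exact hsub hm
  have hbdd : BddBelow ((fun m => pairing m w) '' {m ∈ Δ | IsLatticePoint m}) := by
    refine ⟨c, ?_⟩
    rintro y ⟨m, ⟨hmΔ, _⟩, rfl⟩
    exact hbound m hmΔ
  obtain ⟨v₀, hv₀V, hv₀min⟩ := V.exists_mem_eq_inf' hne f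
  have hv₀le : f v₀ ≤ -1 := by
    by_contra h
    push_neg at h
    have hge : ∀ v ∈ V, (0 : ℝ) ≤ f v := by
      intro v hv
      obtain ⟨z, hz⟩ := pairing_int v (hV v hv) w
      have h1 : (-1 : ℝ) < f v := lt_of_lt_of_le h (hv₀min ▸ Finset.inf'_le f hv)
      show (0 : ℝ) ≤ pairing v w
      rw [hz]
      have hzf : (-1 : ℝ) < (z : ℝ) := by rw [hf] at h1; simpa [hz] using h1
      exact_mod_cast (by exact_mod_cast hzf : (-1 : ℤ) < z)
    have hΔge : ∀ m ∈ Δ, (0 : ℝ) ≤ f m := by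
      intro m hm
      rw [hΔpoly] at hm
      exact convexHull_min hge (convex_halfSpace_ge (pairing_linear w) 0) hm
    set u : Fin n → ℝ := fun i => (w i : ℝ) with hu
    have hu0 : u ≠ 0 := by
      intro h0
      apply hw
      funext i
      have h0i := congrFun h0 i
      simp only [hu, Pi.zero_apply] at h0i
      exact_mod_cast h0i
    have hcont : Continuous (fun t : ℝ => t • u) := by continuity
    have hpre : (fun t : ℝ => t • u) ⁻¹' (interior Δ) ∈ nhds (0 : ℝ) := by
      apply hcont.continuousAt.preimage_mem_nhds
      simpa using mem_interior_iff_mem_nhds.mp h0int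
    obtain ⟨ε, hε, hball⟩ := Metric.mem_nhds_iff.mp hpre
    have htmem : (-(ε / 2)) • u ∈ Δ := by
      have hb : (-(ε / 2)) ∈ Metric.ball (0 : ℝ) ε := by
        simp only [Metric.mem_ball, dist_zero_right, Real.norm_eq_abs]
        rw [abs_of_nonpos (by linarith)]
        linarith
      exact interior_subset (hball hb)
    have hfval : f ((-(ε / 2)) • u) = (-(ε / 2)) * ∑ i, ((w i : ℝ)) ^ 2 := by
      simp only [hf, pairing, hu, Pi.smul_apply, smul_eq_mul, Finset.mul_sum]
      exact Finset.sum_congr rfl fun i _ => by ring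
    have hsum : (0 : ℝ) < ∑ i, ((w i : ℝ)) ^ 2 := by
      have hex : ∃ i, u i ≠ 0 := by
        by_contra hcon
        push_neg at hcon
        exact hu0 (funext hcon)
      obtain ⟨i, hi⟩ := hex
      refine Finset.sum_pos' (fun j _ => sq_nonneg _) ⟨i, Finset.mem_univ i, ?_⟩
      have : u i ^ 2 > 0 := pow_pos (abs_pos.mpr hi) 2 |>.trans_eq (by rw [sq_abs])
      simpa [hu] using this
    have hcontra := hΔge _ htmem
    rw [hfval] at hcontra
    nlinarith
  have hmem : f v₀ ∈ (fun m => pairing m w) '' {m ∈ Δ | IsLatticePoint m} :=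
    ⟨v₀, ⟨hVsub hv₀V, hV v₀ hv₀V⟩, rfl⟩
  exact (csInf_le hbdd hmem).trans hv₀le

/-- If `Δ` is a reflexive polytope in `ℝⁿ` (with the origin as its unique
interior lattice point), then the Fine interior `F(Δ)` equals `{0}`. -/
theorem fineInterior_of_reflexive {n s : ℕ}
    (ν : Fin s → (Fin n → ℤ))
    (V : Finset (Fin n → ℝ)) (hV : ∀ v ∈ V, IsLatticePoint v)
    (Δ : Set (Fin n → ℝ))
    (hΔpoly : Δ = convexHull ℝ (V : Set (Fin n → ℝ)))
    (hΔineq : Δ = { x | ∀ i, (-1 : ℝ) ≤ pairing x (ν i) })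
    (h0int : (0 : Fin n → ℝ) ∈ interior Δ)
    (huniq : ∀ m : Fin n → ℝ, IsLatticePoint m → m ∈ interior Δ → m = 0) :
    FineInterior Δ = {0} := by
  have key : ∀ w : Fin n → ℤ, w ≠ 0 → ordL Δ w ≤ -1 :=
    ordL_le_neg_one V hV Δ hΔpoly h0int
  have h0Δ : (0 : Fin n → ℝ) ∈ Δ := interior_subset h0int
  -- ordL ≥ -1 for each facet normal
  have hord_ge : ∀ i : Fin s, (-1 : ℝ) ≤ ordL Δ (ν i) := by
    intro i
    apply le_csInf
    · exact ⟨pairing 0 (ν i), 0, ⟨h0Δ, fun j => ⟨0, by simp⟩⟩, rfl⟩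
    · rintro y ⟨m, ⟨hmΔ, _⟩, rfl⟩
      rw [hΔineq] at hmΔ
      exact hmΔ i
  ext x
  simp only [Set.mem_singleton_iff]
  constructor
  · intro hx
    by_contra hx0
    -- every positive multiple of x lies in Δ
    have hscale : ∀ t : ℝ, 0 ≤ t → t • x ∈ Δ := by
      intro t ht
      rw [hΔineq]
      intro i
      by_cases hνi : ν i = 0
      · simp [pairing, hνi]
      · have h1 := hx (ν i) hνi
        have h2 := hord_ge i
        have hx0i : (0 : ℝ) ≤ pairing x (ν i) := by linarith
        have : pairing (t • x) (ν i) = t * pairing x (ν i) :=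
          (pairing_linear (ν i)).map_smul t x
        rw [this]
        nlinarith
    -- Δ is bounded
    have hcomp : IsCompact Δ := by
      rw [hΔpoly]
      exact V.finite_toSet.isCompact_convexHull (𝕜 := ℝ)
    obtain ⟨C, hC⟩ := isBounded_iff_forall_norm_le.mp hcomp.isBounded
    have hxnorm : (0 : ℝ) < ‖x‖ := norm_pos_iff.mpr hx0
    set t : ℝ := (C + 1) / ‖x‖ with htdef
    have hCnn : (0 : ℝ) ≤ C := le_trans (by simp) (hC 0 h0Δ)
    have ht : 0 ≤ t := div_nonneg (by linarith) hxnorm.le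
    have hmem := hC (t • x) (hscale t ht)
    rw [norm_smul, Real.norm_eq_abs, abs_of_nonneg ht, htdef,
      div_mul_cancel₀ _ hxnorm.ne'] at hmem
    linarith
  · intro hx
    subst hx
    intro w hw
    have hz : pairing (0 : Fin n → ℝ) w = 0 := by simp [pairing]
    rw [hz]
    linarith [key w hw]
end
end

section
/- Let Δ = conv{(2,1,5), (−2,−1,−3), (2,0,1), (2,2,1)} ⊂ ℝ³ (the polytope of class c). Then the Fine interior of Δ equals conv{(0,0,0), (1,1/2,2), (1,1/4,1), (1,3/4,1)}. -/
noncomputable section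

/-- The polytope of class c): `Δ = conv{(2,1,5), (−2,−1,−3), (2,0,1), (2,2,1)} ⊂ ℝ³`. -/
def Δc : Set (Fin 3 → ℝ) :=
  convexHull ℝ {![2, 1, 5], ![-2, -1, -3], ![2, 0, 1], ![2, 2, 1]}

namespace ClassCAux

lemma pairing3 (x : Fin 3 → ℝ) (ν : Fin 3 → ℤ) :
    pairing x ν = x 0 * (ν 0 : ℝ) + x 1 * (ν 1 : ℝ) + x 2 * (ν 2 : ℝ) := by
  simp [pairing, Fin.sum_univ_three]

lemma pairing_v1 (ν : Fin 3 → ℤ) :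
    pairing ![2, 1, 5] ν = 2 * (ν 0 : ℝ) + (ν 1 : ℝ) + 5 * (ν 2 : ℝ) := by
  rw [pairing3]; norm_num [Matrix.cons_val_two]

lemma pairing_v2 (ν : Fin 3 → ℤ) :
    pairing ![-2, -1, -3] ν = -2 * (ν 0 : ℝ) - (ν 1 : ℝ) - 3 * (ν 2 : ℝ) := by
  rw [pairing3]; norm_num [Matrix.cons_val_two]; try ring

lemma pairing_v3 (ν : Fin 3 → ℤ) :
    pairing ![2, 0, 1] ν = 2 * (ν 0 : ℝ) + (ν 2 : ℝ) := by
  rw [pairing3]; norm_num [Matrix.cons_val_two]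

lemma pairing_v4 (ν : Fin 3 → ℤ) :
    pairing ![2, 2, 1] ν = 2 * (ν 0 : ℝ) + 2 * (ν 1 : ℝ) + (ν 2 : ℝ) := by
  rw [pairing3]; norm_num [Matrix.cons_val_two]

lemma pairing_comb (x y : Fin 3 → ℝ) (a b : ℝ) (ν : Fin 3 → ℤ) :
    pairing (a • x + b • y) ν = a * pairing x ν + b * pairing y ν := by
  simp only [pairing3, Pi.add_apply, Pi.smul_apply, smul_eq_mul]; ring

lemma v1_mem : (![2, 1, 5] : Fin 3 → ℝ) ∈ Δc :=
  subset_convexHull ℝ _ (by simp)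

lemma v2_mem : (![-2, -1, -3] : Fin 3 → ℝ) ∈ Δc :=
  subset_convexHull ℝ _ (by simp)

lemma v3_mem : (![2, 0, 1] : Fin 3 → ℝ) ∈ Δc :=
  subset_convexHull ℝ _ (by simp)

lemma v4_mem : (![2, 2, 1] : Fin 3 → ℝ) ∈ Δc :=
  subset_convexHull ℝ _ (by simp)

lemma lat_v1 : IsLatticePoint (![2, 1, 5] : Fin 3 → ℝ) := by
  intro i; fin_cases i
  · exact ⟨2, by norm_num⟩
  · exact ⟨1, by norm_num⟩
  · exact ⟨5, by norm_num⟩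

lemma lat_v2 : IsLatticePoint (![-2, -1, -3] : Fin 3 → ℝ) := by
  intro i; fin_cases i
  · exact ⟨-2, by norm_num⟩
  · exact ⟨-1, by norm_num⟩
  · exact ⟨-3, by norm_num⟩

lemma lat_v3 : IsLatticePoint (![2, 0, 1] : Fin 3 → ℝ) := by
  intro i; fin_cases i
  · exact ⟨2, by norm_num⟩
  · exact ⟨0, by norm_num⟩
  · exact ⟨1, by norm_num⟩

lemma lat_v4 : IsLatticePoint (![2, 2, 1] : Fin 3 → ℝ) := by
  intro i; fin_cases i
  · exact ⟨2, by norm_num⟩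
  · exact ⟨2, by norm_num⟩
  · exact ⟨1, by norm_num⟩

/-- Lower bound on pairings over all of `Δc`. -/
lemma pairing_lb (r : ℝ) (ν : Fin 3 → ℤ)
    (h1 : r ≤ pairing ![2, 1, 5] ν) (h2 : r ≤ pairing ![-2, -1, -3] ν)
    (h3 : r ≤ pairing ![2, 0, 1] ν) (h4 : r ≤ pairing ![2, 2, 1] ν) :
    ∀ x ∈ Δc, r ≤ pairing x ν := by
  intro x hx
  have hconv : Convex ℝ {y : Fin 3 → ℝ | r ≤ pairing y ν} := by
    intro p hp q hq a b ha hb hab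
    simp only [Set.mem_setOf_eq] at *
    rw [pairing_comb]
    have h5 := mul_le_mul_of_nonneg_left hp ha
    have h6 := mul_le_mul_of_nonneg_left hq hb
    have h7 : a * r + b * r = r := by rw [← add_mul, hab, one_mul]
    linarith
  have hsub : ({![2, 1, 5], ![-2, -1, -3], ![2, 0, 1], ![2, 2, 1]} : Set (Fin 3 → ℝ)) ⊆
      {y : Fin 3 → ℝ | r ≤ pairing y ν} := by
    rintro y (rfl | rfl | rfl | rfl) <;> assumption
  exact convexHull_min hsub hconv hx

lemma bdd (ν : Fin 3 → ℤ) :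
    BddBelow ((fun m => pairing m ν) '' {m ∈ Δc | IsLatticePoint m}) := by
  refine ⟨min (min (pairing ![2, 1, 5] ν) (pairing ![-2, -1, -3] ν))
    (min (pairing ![2, 0, 1] ν) (pairing ![2, 2, 1] ν)), ?_⟩
  rintro b ⟨m, ⟨hm, -⟩, rfl⟩
  refine pairing_lb _ ν ?_ ?_ ?_ ?_ m hm
  · exact (min_le_left _ _).trans (min_le_left _ _)
  · exact (min_le_left _ _).trans (min_le_right _ _)
  · exact (min_le_right _ _).trans (min_le_left _ _)
  · exact (min_le_right _ _).trans (min_le_right _ _)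

lemma ordL_le (v : Fin 3 → ℝ) (hv : v ∈ Δc) (hl : IsLatticePoint v) (ν : Fin 3 → ℤ) :
    ordL Δc ν ≤ pairing v ν :=
  csInf_le (bdd ν) ⟨v, ⟨hv, hl⟩, rfl⟩

lemma ordL_ge (r : ℝ) (ν : Fin 3 → ℤ)
    (h1 : r ≤ pairing ![2, 1, 5] ν) (h2 : r ≤ pairing ![-2, -1, -3] ν)
    (h3 : r ≤ pairing ![2, 0, 1] ν) (h4 : r ≤ pairing ![2, 2, 1] ν) :
    r ≤ ordL Δc ν := by
  refine le_csInf ⟨pairing ![2, 1, 5] ν, ⟨![2, 1, 5], ⟨v1_mem, lat_v1⟩, rfl⟩⟩ ?_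
  rintro b ⟨m, ⟨hm, -⟩, rfl⟩
  exact pairing_lb r ν h1 h2 h3 h4 m hm

lemma nu_ne (ν : Fin 3 → ℤ) (hν : ν ≠ 0) : ¬(ν 0 = 0 ∧ ν 1 = 0 ∧ ν 2 = 0) := by
  rintro ⟨h0, h1, h2⟩
  exact hν (by funext i; fin_cases i <;> assumption)

lemma fine_convex : Convex ℝ (FineInterior Δc) := by
  intro x hx y hy a b ha hb hab
  intro ν hν
  have hx' := hx ν hν
  have hy' := hy ν hν
  show ordL Δc ν + 1 ≤ pairing (a • x + b • y) ν
  rw [pairing_comb]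
  have h5 := mul_le_mul_of_nonneg_left hx' ha
  have h6 := mul_le_mul_of_nonneg_left hy' hb
  have h7 : a * (ordL Δc ν + 1) + b * (ordL Δc ν + 1) = ordL Δc ν + 1 := by
    rw [← add_mul, hab, one_mul]
  linarith

/-- Generic step: if one of the vertex pairings is small enough, done. -/
lemma step (w : Fin 3 → ℝ) (ν : Fin 3 → ℤ) (v : Fin 3 → ℝ) (hv : v ∈ Δc)
    (hl : IsLatticePoint v) (h : pairing v ν + 1 ≤ pairing w ν) :
    ordL Δc ν + 1 ≤ pairing w ν := by
  have := ordL_le v hv hl ν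
  linarith

lemma w0_mem : (![0, 0, 0] : Fin 3 → ℝ) ∈ FineInterior Δc := by
  intro ν hν
  have hne := nu_ne ν hν
  set a := ν 0 with ha; set b := ν 1 with hb; set c := ν 2 with hc
  have hw : pairing ![0, 0, 0] ν = 0 := by rw [pairing3]; norm_num [Matrix.cons_val_two]
  by_cases H1 : pairing ![2, 1, 5] ν + 1 ≤ pairing ![0, 0, 0] ν
  · exact step _ ν _ v1_mem lat_v1 H1
  by_cases H2 : pairing ![-2, -1, -3] ν + 1 ≤ pairing ![0, 0, 0] ν
  · exact step _ ν _ v2_mem lat_v2 H2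
  by_cases H3 : pairing ![2, 0, 1] ν + 1 ≤ pairing ![0, 0, 0] ν
  · exact step _ ν _ v3_mem lat_v3 H3
  by_cases H4 : pairing ![2, 2, 1] ν + 1 ≤ pairing ![0, 0, 0] ν
  · exact step _ ν _ v4_mem lat_v4 H4
  exfalso
  rw [hw, pairing_v1] at H1
  rw [hw, pairing_v2] at H2
  rw [hw, pairing_v3] at H3
  rw [hw, pairing_v4] at H4
  push_neg at H1 H2 H3 H4
  have K1 : (0 : ℤ) < 4 * (2 * a + b + 5 * c) + 4 := by
    exact_mod_cast (show (0 : ℝ) < ((4 * (2 * a + b + 5 * c) + 4 : ℤ) : ℝ) by push_cast; linarith)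
  have K2 : (0 : ℤ) < 4 * (-2 * a - b - 3 * c) + 4 := by
    exact_mod_cast (show (0 : ℝ) < ((4 * (-2 * a - b - 3 * c) + 4 : ℤ) : ℝ) by push_cast; linarith)
  have K3 : (0 : ℤ) < 4 * (2 * a + c) + 4 := by
    exact_mod_cast (show (0 : ℝ) < ((4 * (2 * a + c) + 4 : ℤ) : ℝ) by push_cast; linarith)
  have K4 : (0 : ℤ) < 4 * (2 * a + 2 * b + c) + 4 := by
    exact_mod_cast (show (0 : ℝ) < ((4 * (2 * a + 2 * b + c) + 4 : ℤ) : ℝ) by push_cast; linarith)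
  have hc : c = 0 := by omega
  omega

lemma w1_mem : (![1, 1/2, 2] : Fin 3 → ℝ) ∈ FineInterior Δc := by
  intro ν hν
  have hne := nu_ne ν hν
  set a := ν 0 with ha; set b := ν 1 with hb; set c := ν 2 with hc
  have hw : pairing ![1, 1/2, 2] ν = (a : ℝ) + (b : ℝ) / 2 + 2 * (c : ℝ) := by
    rw [pairing3]; norm_num [Matrix.cons_val_two]; try ring
  by_cases H1 : pairing ![2, 1, 5] ν + 1 ≤ pairing ![1, 1/2, 2] ν
  · exact step _ ν _ v1_mem lat_v1 H1
  by_cases H2 : pairing ![-2, -1, -3] ν + 1 ≤ pairing ![1, 1/2, 2] ν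
  · exact step _ ν _ v2_mem lat_v2 H2
  by_cases H3 : pairing ![2, 0, 1] ν + 1 ≤ pairing ![1, 1/2, 2] ν
  · exact step _ ν _ v3_mem lat_v3 H3
  by_cases H4 : pairing ![2, 2, 1] ν + 1 ≤ pairing ![1, 1/2, 2] ν
  · exact step _ ν _ v4_mem lat_v4 H4
  exfalso
  rw [hw, pairing_v1] at H1
  rw [hw, pairing_v2] at H2
  rw [hw, pairing_v3] at H3
  rw [hw, pairing_v4] at H4
  push_neg at H1 H2 H3 H4
  have K1 : (4 * a + 2 * b + 8 * c : ℤ) < 4 * (2 * a + b + 5 * c) + 4 := by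
    exact_mod_cast (show ((4 * a + 2 * b + 8 * c : ℤ) : ℝ) < ((4 * (2 * a + b + 5 * c) + 4 : ℤ) : ℝ) by push_cast; linarith)
  have K2 : (4 * a + 2 * b + 8 * c : ℤ) < 4 * (-2 * a - b - 3 * c) + 4 := by
    exact_mod_cast (show ((4 * a + 2 * b + 8 * c : ℤ) : ℝ) < ((4 * (-2 * a - b - 3 * c) + 4 : ℤ) : ℝ) by push_cast; linarith)
  have K3 : (4 * a + 2 * b + 8 * c : ℤ) < 4 * (2 * a + c) + 4 := by
    exact_mod_cast (show ((4 * a + 2 * b + 8 * c : ℤ) : ℝ) < ((4 * (2 * a + c) + 4 : ℤ) : ℝ) by push_cast; linarith)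
  have K4 : (4 * a + 2 * b + 8 * c : ℤ) < 4 * (2 * a + 2 * b + c) + 4 := by
    exact_mod_cast (show ((4 * a + 2 * b + 8 * c : ℤ) : ℝ) < ((4 * (2 * a + 2 * b + c) + 4 : ℤ) : ℝ) by push_cast; linarith)
  have hc : c = 0 := by omega
  omega

lemma w2_mem : (![1, 1/4, 1] : Fin 3 → ℝ) ∈ FineInterior Δc := by
  intro ν hν
  have hne := nu_ne ν hν
  set a := ν 0 with ha; set b := ν 1 with hb; set c := ν 2 with hc
  have hw : pairing ![1, 1/4, 1] ν = (a : ℝ) + (b : ℝ) / 4 + (c : ℝ) := by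
    rw [pairing3]; norm_num [Matrix.cons_val_two]; try ring
  by_cases H1 : pairing ![2, 1, 5] ν + 1 ≤ pairing ![1, 1/4, 1] ν
  · exact step _ ν _ v1_mem lat_v1 H1
  by_cases H2 : pairing ![-2, -1, -3] ν + 1 ≤ pairing ![1, 1/4, 1] ν
  · exact step _ ν _ v2_mem lat_v2 H2
  by_cases H3 : pairing ![2, 0, 1] ν + 1 ≤ pairing ![1, 1/4, 1] ν
  · exact step _ ν _ v3_mem lat_v3 H3
  by_cases H4 : pairing ![2, 2, 1] ν + 1 ≤ pairing ![1, 1/4, 1] ν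
  · exact step _ ν _ v4_mem lat_v4 H4
  exfalso
  rw [hw, pairing_v1] at H1
  rw [hw, pairing_v2] at H2
  rw [hw, pairing_v3] at H3
  rw [hw, pairing_v4] at H4
  push_neg at H1 H2 H3 H4
  have K1 : (4 * a + b + 4 * c : ℤ) < 4 * (2 * a + b + 5 * c) + 4 := by
    exact_mod_cast (show ((4 * a + b + 4 * c : ℤ) : ℝ) < ((4 * (2 * a + b + 5 * c) + 4 : ℤ) : ℝ) by push_cast; linarith)
  have K2 : (4 * a + b + 4 * c : ℤ) < 4 * (-2 * a - b - 3 * c) + 4 := by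
    exact_mod_cast (show ((4 * a + b + 4 * c : ℤ) : ℝ) < ((4 * (-2 * a - b - 3 * c) + 4 : ℤ) : ℝ) by push_cast; linarith)
  have K3 : (4 * a + b + 4 * c : ℤ) < 4 * (2 * a + c) + 4 := by
    exact_mod_cast (show ((4 * a + b + 4 * c : ℤ) : ℝ) < ((4 * (2 * a + c) + 4 : ℤ) : ℝ) by push_cast; linarith)
  have K4 : (4 * a + b + 4 * c : ℤ) < 4 * (2 * a + 2 * b + c) + 4 := by
    exact_mod_cast (show ((4 * a + b + 4 * c : ℤ) : ℝ) < ((4 * (2 * a + 2 * b + c) + 4 : ℤ) : ℝ) by push_cast; linarith)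
  have hc : c = 0 := by omega
  have hb2 : -1 ≤ b ∧ b ≤ 1 := by omega
  have ha2 : -1 ≤ a ∧ a ≤ 1 := by omega
  obtain ⟨hb3, hb4⟩ := hb2
  obtain ⟨ha3, ha4⟩ := ha2
  interval_cases a <;> interval_cases b <;> omega

lemma w3_mem : (![1, 3/4, 1] : Fin 3 → ℝ) ∈ FineInterior Δc := by
  intro ν hν
  have hne := nu_ne ν hν
  set a := ν 0 with ha; set b := ν 1 with hb; set c := ν 2 with hc
  have hw : pairing ![1, 3/4, 1] ν = (a : ℝ) + 3 * (b : ℝ) / 4 + (c : ℝ) := by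
    rw [pairing3]; norm_num [Matrix.cons_val_two]; try ring
  by_cases H1 : pairing ![2, 1, 5] ν + 1 ≤ pairing ![1, 3/4, 1] ν
  · exact step _ ν _ v1_mem lat_v1 H1
  by_cases H2 : pairing ![-2, -1, -3] ν + 1 ≤ pairing ![1, 3/4, 1] ν
  · exact step _ ν _ v2_mem lat_v2 H2
  by_cases H3 : pairing ![2, 0, 1] ν + 1 ≤ pairing ![1, 3/4, 1] ν
  · exact step _ ν _ v3_mem lat_v3 H3
  by_cases H4 : pairing ![2, 2, 1] ν + 1 ≤ pairing ![1, 3/4, 1] ν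
  · exact step _ ν _ v4_mem lat_v4 H4
  exfalso
  rw [hw, pairing_v1] at H1
  rw [hw, pairing_v2] at H2
  rw [hw, pairing_v3] at H3
  rw [hw, pairing_v4] at H4
  push_neg at H1 H2 H3 H4
  have K1 : (4 * a + 3 * b + 4 * c : ℤ) < 4 * (2 * a + b + 5 * c) + 4 := by
    exact_mod_cast (show ((4 * a + 3 * b + 4 * c : ℤ) : ℝ) < ((4 * (2 * a + b + 5 * c) + 4 : ℤ) : ℝ) by push_cast; linarith)
  have K2 : (4 * a + 3 * b + 4 * c : ℤ) < 4 * (-2 * a - b - 3 * c) + 4 := by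
    exact_mod_cast (show ((4 * a + 3 * b + 4 * c : ℤ) : ℝ) < ((4 * (-2 * a - b - 3 * c) + 4 : ℤ) : ℝ) by push_cast; linarith)
  have K3 : (4 * a + 3 * b + 4 * c : ℤ) < 4 * (2 * a + c) + 4 := by
    exact_mod_cast (show ((4 * a + 3 * b + 4 * c : ℤ) : ℝ) < ((4 * (2 * a + c) + 4 : ℤ) : ℝ) by push_cast; linarith)
  have K4 : (4 * a + 3 * b + 4 * c : ℤ) < 4 * (2 * a + 2 * b + c) + 4 := by
    exact_mod_cast (show ((4 * a + 3 * b + 4 * c : ℤ) : ℝ) < ((4 * (2 * a + 2 * b + c) + 4 : ℤ) : ℝ) by push_cast; linarith)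
  have hc : c = 0 := by omega
  have hb2 : -1 ≤ b ∧ b ≤ 1 := by omega
  have ha2 : -1 ≤ a ∧ a ≤ 1 := by omega
  obtain ⟨hb3, hb4⟩ := hb2
  obtain ⟨ha3, ha4⟩ := ha2
  interval_cases a <;> interval_cases b <;> omega

end ClassCAux

open ClassCAux in
/-- The Fine interior of the class c) polytope equals
`conv{(0,0,0), (1,1/2,2), (1,1/4,1), (1,3/4,1)}`. -/
theorem fineInterior_classC :
    FineInterior Δc =
      convexHull ℝ {![0, 0, 0], ![1, 1/2, 2], ![1, 1/4, 1], ![1, 3/4, 1]} := by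
  apply Set.Subset.antisymm
  · -- ⊆
    intro x hx
    -- facet inequalities from the Fine-interior condition
    have hA : x 0 ≤ 1 := by
      have h := hx ![-1, 0, 0] (by
        intro h; have := congrFun h 0; simp at this)
      have hp : pairing x ![-1, 0, 0] = -(x 0) := by rw [pairing3]; norm_num [Matrix.cons_val_two]
      have ho : (-2 : ℝ) ≤ ordL Δc ![-1, 0, 0] := by
        refine ordL_ge _ _ ?_ ?_ ?_ ?_ <;>
          simp only [pairing_v1, pairing_v2, pairing_v3, pairing_v4] <;> norm_num [Matrix.cons_val_two]
      rw [hp] at h; linarith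
    have hB : x 0 ≤ x 2 := by
      have h := hx ![-1, 0, 1] (by
        intro h; have := congrFun h 0; simp at this)
      have hp : pairing x ![-1, 0, 1] = -(x 0) + x 2 := by rw [pairing3]; norm_num [Matrix.cons_val_two]; try ring
      have ho : (-1 : ℝ) ≤ ordL Δc ![-1, 0, 1] := by
        refine ordL_ge _ _ ?_ ?_ ?_ ?_ <;>
          simp only [pairing_v1, pairing_v2, pairing_v3, pairing_v4] <;> norm_num [Matrix.cons_val_two]
      rw [hp] at h; linarith
    have hC : 4 * x 1 + x 2 ≤ 4 * x 0 := by
      have h := hx ![4, -4, -1] (by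
        intro h; have := congrFun h 0; simp at this)
      have hp : pairing x ![4, -4, -1] = 4 * x 0 - 4 * x 1 - x 2 := by
        rw [pairing3]; norm_num [Matrix.cons_val_two]; try ring
      have ho : (-1 : ℝ) ≤ ordL Δc ![4, -4, -1] := by
        refine ordL_ge _ _ ?_ ?_ ?_ ?_ <;>
          simp only [pairing_v1, pairing_v2, pairing_v3, pairing_v4] <;> norm_num [Matrix.cons_val_two]
      rw [hp] at h; linarith
    have hD : x 2 ≤ 4 * x 1 := by
      have h := hx ![0, 4, -1] (by
        intro h; have := congrFun h 1; simp at this)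
      have hp : pairing x ![0, 4, -1] = 4 * x 1 - x 2 := by
        rw [pairing3]; norm_num [Matrix.cons_val_two]; try ring
      have ho : (-1 : ℝ) ≤ ordL Δc ![0, 4, -1] := by
        refine ordL_ge _ _ ?_ ?_ ?_ ?_ <;>
          simp only [pairing_v1, pairing_v2, pairing_v3, pairing_v4] <;> norm_num [Matrix.cons_val_two]
      rw [hp] at h; linarith
    -- barycentric coordinates
    set t : Fin 4 → ℝ :=
      ![1 - x 0, x 2 - x 0, 2 * x 0 - 2 * x 1 - x 2 / 2, 2 * x 1 - x 2 / 2] with ht_def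
    set z : Fin 4 → (Fin 3 → ℝ) :=
      ![![0, 0, 0], ![1, 1/2, 2], ![1, 1/4, 1], ![1, 3/4, 1]] with hz_def
    have ht : ∀ i ∈ Finset.univ, (0 : ℝ) ≤ t i := by
      intro i _
      fin_cases i <;> simp [ht_def] <;> linarith
    have hsum : ∑ i, t i = 1 := by
      simp [ht_def, Fin.sum_univ_four]; ring
    have hz : ∀ i ∈ Finset.univ, z i ∈
        ({![0, 0, 0], ![1, 1/2, 2], ![1, 1/4, 1], ![1, 3/4, 1]} : Set (Fin 3 → ℝ)) := by
      intro i _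
      fin_cases i <;> simp [hz_def]
    have hmem := Finset.centerMass_mem_convexHull Finset.univ ht (by rw [hsum]; norm_num) hz
    rw [Finset.centerMass_eq_of_sum_1 _ _ hsum] at hmem
    have hx_eq : ∑ i, t i • z i = x := by
      funext j
      have h1 : (∑ i, t i • z i) j = ∑ i, t i * z i j := by
        rw [Finset.sum_apply]
        simp [smul_eq_mul]
      rw [h1, Fin.sum_univ_four]
      fin_cases j <;>
        simp [ht_def, hz_def, Matrix.cons_val_zero, Matrix.cons_val_one, Matrix.head_cons,
          Matrix.cons_val_two, Matrix.tail_cons, Matrix.vecHead, Matrix.vecTail] <;>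
        try ring
    rwa [hx_eq] at hmem
  · -- ⊇
    apply convexHull_min ?_ fine_convex
    rintro y (rfl | rfl | rfl | rfl)
    · exact w0_mem
    · exact w1_mem
    · exact w2_mem
    · exact w3_mem
end
end
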